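/- Let A, B ⊆ ℝ^d be finite sets with |B| = d+1. Assume that B is proper d-dimensional and that A is contained in the convex hull of B. Put A_1 = A ∩ B and A_2 = A \ B, and let k be a positive integer. Then the sets A_1 + kB and A_2 + kB are disjoint, and the translates a + kB for a ∈ A_2 are pairwise disjoint; consequently |A + kB| = |A_1 + kB| + |A_2|·C(d+k, k). -/
import Mathlib

open Pointwise

/-- The `k`-fold sumset `B + B + ⋯ + B` (`k` summands). -/
def kfoldSumset {α : Type*} [AddCommMonoid α] [DecidableEq α]
    (k : ℕ) (B : Finset α) : Finset α :=
  ∑ _i ∈ Finset.range k, B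

lemma kfold_succ {α : Type*} [AddCommMonoid α] [DecidableEq α] (k : ℕ) (B : Finset α) :
    kfoldSumset (k+1) B = kfoldSumset k B + B := by
  rw [kfoldSumset, Finset.sum_range_succ]; rfl

lemma mem_kfoldSumset_iff {M : Type*} [AddCommMonoid M] [DecidableEq M]
    {ι : Type*} {p : ι → M} {B : Finset M}
    (hmem : ∀ i, p i ∈ B) (hsurj : ∀ x ∈ B, ∃ i, p i = x)
    (k : ℕ) (x : M) :
    x ∈ kfoldSumset k B ↔ ∃ m : Multiset ι, Multiset.card m = k ∧ (m.map p).sum = x := by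
  induction k generalizing x with
  | zero =>
    simp only [kfoldSumset, Finset.range_zero, Finset.sum_empty, Finset.mem_zero]
    constructor
    · rintro rfl; exact ⟨0, by simp⟩
    · rintro ⟨m, hm, rfl⟩
      rw [Multiset.card_eq_zero] at hm; subst hm; simp
  | succ k ih =>
    rw [kfold_succ, Finset.mem_add]
    constructor
    · rintro ⟨y, hy, z, hz, rfl⟩
      obtain ⟨m, hmc, rfl⟩ := (ih y).mp hy
      obtain ⟨i, rfl⟩ := hsurj z hz
      exact ⟨i ::ₘ m, by simp [hmc], by simp [add_comm]⟩
    · rintro ⟨m, hmc, rfl⟩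
      have hm0 : m ≠ 0 := by rintro rfl; simp at hmc
      obtain ⟨i, hi⟩ := Multiset.exists_mem_of_ne_zero hm0
      obtain ⟨m', rfl⟩ := Multiset.exists_cons_of_mem hi
      refine ⟨(m'.map p).sum, (ih _).mpr ⟨m', by simpa using hmc, rfl⟩, p i, hmem i, ?_⟩
      simp [add_comm]

lemma count_smul_sum {ι M : Type*} [Fintype ι] [DecidableEq ι] [AddCommMonoid M]
    (p : ι → M) (m : Multiset ι) :
    ∑ i : ι, m.count i • p i = (m.map p).sum := by
  rw [Finset.sum_multiset_map_count]
  refine (Finset.sum_subset (Finset.subset_univ _) ?_).symm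
  intro i _ hi
  simp [Multiset.count_eq_zero_of_notMem (by simpa using hi)]

lemma count_sum_card {ι : Type*} [Fintype ι] [DecidableEq ι] (m : Multiset ι) :
    ∑ i : ι, m.count i = Multiset.card m := by
  rw [← Multiset.toFinset_sum_count_eq]
  refine (Finset.sum_subset (Finset.subset_univ _) ?_).symm
  intro i _ hi
  simp [Multiset.count_eq_zero_of_notMem (by simpa using hi)]

lemma coeff_unique {V : Type*} [AddCommGroup V] [Module ℝ V]
    {ι : Type*} [Fintype ι] {p : ι → V} (hp : AffineIndependent ℝ p)
    {w w' : ι → ℝ} {s : ℝ} (hs : s ≠ 0) (hw : ∑ i, w i = s) (hw' : ∑ i, w' i = s)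
    (h : ∑ i, w i • p i = ∑ i, w' i • p i) : w = w' := by
  have hu : ∑ i, s⁻¹ * w i = 1 := by rw [← Finset.mul_sum, hw, inv_mul_cancel₀ hs]
  have hu' : ∑ i, s⁻¹ * w' i = 1 := by rw [← Finset.mul_sum, hw', inv_mul_cancel₀ hs]
  have key := (affineIndependent_iff_eq_of_fintype_affineCombination_eq ℝ p).mp hp
    (fun i => s⁻¹ * w i) (fun i => s⁻¹ * w' i) hu hu' ?_
  · funext i
    have := congrFun key i
    simpa using mul_left_cancel₀ (inv_ne_zero hs) this
  · rw [Finset.univ.affineCombination_eq_linear_combination _ _ hu,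
      Finset.univ.affineCombination_eq_linear_combination _ _ hu']
    simp only [mul_smul, ← Finset.smul_sum, h]

lemma weight_eq_indicator {ι : Type*} [Fintype ι] [DecidableEq ι]
    {w : ι → ℝ} (h0 : ∀ i, 0 ≤ w i) (h1 : ∑ i, w i = 1) {i0 : ι} (hi0 : 1 ≤ w i0) :
    w = fun j => if j = i0 then 1 else 0 := by
  have hsplit : w i0 + ∑ j ∈ Finset.univ.erase i0, w j = 1 := by
    rw [Finset.add_sum_erase _ w (Finset.mem_univ i0)]; exact h1
  have hrest0 : ∑ j ∈ Finset.univ.erase i0, w j = 0 := by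
    have hnn : 0 ≤ ∑ j ∈ Finset.univ.erase i0, w j :=
      Finset.sum_nonneg fun j _ => h0 j
    linarith
  have hzero : ∀ j ∈ Finset.univ.erase i0, w j = 0 :=
    (Finset.sum_eq_zero_iff_of_nonneg fun j _ => h0 j).mp hrest0
  funext j
  by_cases hj : j = i0
  · subst hj; simp; linarith
  · simp [hj, hzero j (by simp [hj])]

lemma indicator_combo {V : Type*} [AddCommGroup V] [Module ℝ V]
    {ι : Type*} [Fintype ι] [DecidableEq ι] (p : ι → V) (i0 : ι) :
    ∑ j, (if j = i0 then (1:ℝ) else 0) • p j = p i0 := by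
  simp [ite_smul]

lemma int_weights_indicator {ι : Type*} [Fintype ι] [DecidableEq ι]
    {w : ι → ℝ} (h0 : ∀ i, 0 ≤ w i) (h1 : ∑ i, w i = 1)
    (hz : ∀ i, ∃ z : ℤ, w i = z) :
    ∃ i0, w = fun j => if j = i0 then 1 else 0 := by
  by_contra hc
  push_neg at hc
  have hall : ∀ i, w i = 0 := by
    intro i
    obtain ⟨z, hzi⟩ := hz i
    rcases lt_or_ge (w i) 1 with hlt | hge
    · have hz0 : (0:ℤ) ≤ z := by exact_mod_cast hzi ▸ h0 i
      have hz1 : z < 1 := by exact_mod_cast hzi ▸ hlt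
      have : z = 0 := by omega
      rw [hzi, this]; norm_num
    · exact absurd (weight_eq_indicator h0 h1 hge) (hc i)
  rw [Finset.sum_eq_zero fun i _ => hall i] at h1
  norm_num at h1

lemma sum_reindex {M γ : Type*} [AddCommMonoid γ] {ι : Type*} [Fintype ι]
    {p : ι → M} {B : Finset M}
    (hmem : ∀ i, p i ∈ B) (hinj : Function.Injective p) (hsurj : ∀ x ∈ B, ∃ i, p i = x)
    (g : M → γ) : ∑ y ∈ B, g y = ∑ i, g (p i) :=
  (Finset.sum_bij (fun i _ => p i) (fun i _ => hmem i) (fun i _ j _ h => hinj h)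
    (fun y hy => let ⟨i, hi⟩ := hsurj y hy; ⟨i, Finset.mem_univ i, hi⟩)
    (fun i _ => rfl)).symm

theorem simplex_case_disjoint_decomposition (d k : ℕ) (hk : 0 < k)
    (A B : Finset (Fin d → ℝ)) (hB : B.card = d + 1)
    (hBspan : affineSpan ℝ (B : Set (Fin d → ℝ)) = ⊤)
    (hAB : (A : Set (Fin d → ℝ)) ⊆ convexHull ℝ (B : Set (Fin d → ℝ))) :
    Disjoint ((A ∩ B) + kfoldSumset k B) ((A \ B) + kfoldSumset k B) ∧
    ((A \ B : Finset (Fin d → ℝ)) : Set (Fin d → ℝ)).Pairwise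
      (fun a a' => Disjoint ({a} + kfoldSumset k B) ({a'} + kfoldSumset k B)) ∧
    (A + kfoldSumset k B).card
      = ((A ∩ B) + kfoldSumset k B).card + (A \ B).card * (d + k).choose k := by
  classical
  set q : Fin (d+1) ≃ {x // x ∈ B} := (B.equivFin.trans (finCongr hB)).symm with hq
  set p : Fin (d+1) → (Fin d → ℝ) := fun i => (q i : Fin d → ℝ) with hpdef
  have hmem : ∀ i, p i ∈ B := fun i => (q i).2
  have hsurj : ∀ x ∈ B, ∃ i, p i = x := fun x hx => ⟨q.symm ⟨x, hx⟩, by simp [hpdef]⟩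
  have hinj : Function.Injective p := fun i j h => q.injective (Subtype.ext h)
  have hrange : Set.range p = (B : Set (Fin d → ℝ)) := by
    ext x
    constructor
    · rintro ⟨i, rfl⟩; exact hmem i
    · intro hx; exact hsurj x hx
  have hai : AffineIndependent ℝ p := by
    rw [affineIndependent_iff_finrank_vectorSpan_eq ℝ p (Fintype.card_fin (d+1))]
    rw [hrange, ← direction_affineSpan, hBspan, AffineSubspace.direction_top, finrank_top]
    simp
  -- coefficients for elements of the k-fold sumset
  have hkB : ∀ {x : Fin d → ℝ}, x ∈ kfoldSumset k B →
      ∃ n : Fin (d+1) → ℕ, ∑ i, n i = k ∧ ∑ i, (n i : ℝ) • p i = x := by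
    intro x hx
    obtain ⟨m, hmc, rfl⟩ := (mem_kfoldSumset_iff hmem hsurj k x).mp hx
    refine ⟨fun i => m.count i, by rw [count_sum_card]; exact hmc, ?_⟩
    rw [← count_smul_sum p m]
    exact Finset.sum_congr rfl fun i _ => Nat.cast_smul_eq_nsmul ℝ _ _
  -- convex hull coefficients for elements of A
  have hcoeff : ∀ a ∈ A, ∃ w : Fin (d+1) → ℝ,
      (∀ i, 0 ≤ w i) ∧ ∑ i, w i = 1 ∧ ∑ i, w i • p i = a := by
    intro a ha
    have hmemc := hAB ha
    rw [Finset.convexHull_eq] at hmemc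
    obtain ⟨w, hw0, hw1, hwa⟩ := hmemc
    refine ⟨fun i => w (p i), fun i => hw0 _ (hmem i), ?_, ?_⟩
    · rw [← sum_reindex hmem hinj hsurj w]; exact hw1
    · rw [← hwa, Finset.centerMass_eq_of_sum_1 _ _ hw1]
      simp only [id_eq]
      rw [sum_reindex hmem hinj hsurj (fun y => w y • y)]
  -- Claim 1
  have hdisj1 : Disjoint ((A ∩ B) + kfoldSumset k B) ((A \ B) + kfoldSumset k B) := by
    rw [Finset.disjoint_left]
    intro x hx1 hx2
    rw [Finset.mem_add] at hx1 hx2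
    obtain ⟨a, ha, y, hy, hxy⟩ := hx1
    obtain ⟨a', ha', y', hy', hxy'⟩ := hx2
    obtain ⟨n, hn, hny⟩ := hkB hy
    obtain ⟨n', hn', hny'⟩ := hkB hy'
    rw [Finset.mem_inter] at ha
    rw [Finset.mem_sdiff] at ha'
    obtain ⟨i0, hi0⟩ := hsurj a ha.2
    obtain ⟨w, hw0, hw1, hwa⟩ := hcoeff a' ha'.1
    have hEq : (fun i => (if i = i0 then (1:ℝ) else 0) + n i) = fun i => w i + n' i := by
      apply coeff_unique hai (s := (k:ℝ)+1) (by positivity)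
      · rw [Finset.sum_add_distrib]
        have : ∑ i, (if i = i0 then (1:ℝ) else 0) = 1 := by simp
        rw [this]
        have : ∑ i, (n i : ℝ) = (k : ℝ) := by exact_mod_cast congrArg (Nat.cast (R := ℝ)) hn
        rw [this]; ring
      · rw [Finset.sum_add_distrib, hw1]
        have : ∑ i, (n' i : ℝ) = (k : ℝ) := by exact_mod_cast congrArg (Nat.cast (R := ℝ)) hn'
        rw [this]; ring
      · simp only [add_smul]
        rw [Finset.sum_add_distrib, Finset.sum_add_distrib, indicator_combo, hi0, hny, hny', hwa,
          hxy, hxy']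
    have hwz : ∀ i, ∃ z : ℤ, w i = z := by
      intro i
      refine ⟨(if i = i0 then 1 else 0) + (n i : ℤ) - n' i, ?_⟩
      have h := congrFun hEq i
      push_cast
      by_cases hii : i = i0 <;> simp only [hii, if_true, if_false] at h ⊢ <;> linarith
    obtain ⟨i1, hwi⟩ := int_weights_indicator hw0 hw1 hwz
    have haB : a' = p i1 := by rw [← hwa, hwi, indicator_combo]
    exact ha'.2 (haB ▸ hmem i1)
  -- Claim 2
  have hdisj2 : ∀ a ∈ A \ B, ∀ a' ∈ A \ B, a ≠ a' →
      Disjoint ({a} + kfoldSumset k B) ({a'} + kfoldSumset k B) := by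
    intro a ha a' ha' hne
    rw [Finset.disjoint_left]
    intro x hx1 hx2
    rw [Finset.mem_add] at hx1 hx2
    obtain ⟨b, hb, y, hy, hxy⟩ := hx1
    obtain ⟨b', hb', y', hy', hxy'⟩ := hx2
    rw [Finset.mem_singleton] at hb hb'
    subst hb; subst hb'
    rename' b => a, b' => a'
    rw [Finset.mem_sdiff] at ha ha'
    obtain ⟨n, hn, hny⟩ := hkB hy
    obtain ⟨n', hn', hny'⟩ := hkB hy'
    obtain ⟨w, hw0, hw1, hwa⟩ := hcoeff a ha.1
    obtain ⟨w', hw0', hw1', hwa'⟩ := hcoeff a' ha'.1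
    have hEq : (fun i => w i + n i) = fun i => w' i + n' i := by
      apply coeff_unique hai (s := (k:ℝ)+1) (by positivity)
      · rw [Finset.sum_add_distrib, hw1]
        have : ∑ i, (n i : ℝ) = (k : ℝ) := by exact_mod_cast congrArg (Nat.cast (R := ℝ)) hn
        rw [this]; ring
      · rw [Finset.sum_add_distrib, hw1']
        have : ∑ i, (n' i : ℝ) = (k : ℝ) := by exact_mod_cast congrArg (Nat.cast (R := ℝ)) hn'
        rw [this]; ring
      · simp only [add_smul]
        rw [Finset.sum_add_distrib, Finset.sum_add_distrib, hny, hny', hwa, hwa', hxy, hxy']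
    have hlt : ∀ (u : Fin (d+1) → ℝ), (∀ i, 0 ≤ u i) → ∑ i, u i = 1 →
        ∑ i, u i • p i = a → a ∉ B → ∀ i, u i < 1 := by
      intro u hu0 hu1 hua haB i
      by_contra h
      push_neg at h
      have hind := weight_eq_indicator hu0 hu1 h
      have : a = p i := by rw [← hua, hind, indicator_combo]
      exact haB (this ▸ hmem i)
    have hlta := hlt w hw0 hw1 hwa ha.2
    have hlta' : ∀ i, w' i < 1 := by
      intro i
      by_contra h
      push_neg at h
      have hind := weight_eq_indicator hw0' hw1' h
      have : a' = p i := by rw [← hwa', hind, indicator_combo]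
      exact ha'.2 (this ▸ hmem i)
    have hww : w = w' := by
      funext i
      have h := congrFun hEq i
      have hzr : w i - w' i = ((n' i : ℤ) - n i : ℤ) := by push_cast; linarith
      have hz1 : ((n' i : ℤ) - n i : ℤ) < 1 := by
        have := hw0' i; have := hlta i
        have : (((n' i : ℤ) - n i : ℤ) : ℝ) < 1 := by rw [← hzr]; linarith
        exact_mod_cast this
      have hz2 : (-1 : ℤ) < ((n' i : ℤ) - n i : ℤ) := by
        have := hw0 i; have := hlta' i
        have : (-1 : ℝ) < (((n' i : ℤ) - n i : ℤ) : ℝ) := by rw [← hzr]; linarith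
        exact_mod_cast this
      have hz0 : ((n' i : ℤ) - n i : ℤ) = 0 := by omega
      rw [hz0] at hzr
      push_cast at hzr
      linarith
    exact hne (by rw [← hwa, ← hwa', hww])
  -- cardinality of the k-fold sumset
  have hkBcard : (kfoldSumset k B).card = (d + k).choose k := by
    have himg : kfoldSumset k B = Finset.univ.image
        (fun m : Sym (Fin (d+1)) k => ((m : Multiset (Fin (d+1))).map p).sum) := by
      ext x
      rw [mem_kfoldSumset_iff hmem hsurj]
      simp only [Finset.mem_image, Finset.mem_univ, true_and]
      constructor
      · rintro ⟨m, hmc, rfl⟩; exact ⟨⟨m, hmc⟩, rfl⟩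
      · rintro ⟨⟨m, hmc⟩, rfl⟩; exact ⟨m, hmc, rfl⟩
    have hinj2 : Function.Injective
        (fun m : Sym (Fin (d+1)) k => ((m : Multiset (Fin (d+1))).map p).sum) := by
      intro m m' h
      have hc : (fun i => ((m : Multiset (Fin (d+1))).count i : ℝ)) =
          fun i => ((m' : Multiset (Fin (d+1))).count i : ℝ) := by
        apply coeff_unique hai (s := (k:ℝ)) (by exact_mod_cast hk.ne')
        · rw [← Nat.cast_sum, count_sum_card]
          exact_mod_cast m.2
        · rw [← Nat.cast_sum, count_sum_card]
          exact_mod_cast m'.2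
        · have e1 : ∑ i, ((m : Multiset (Fin (d+1))).count i : ℝ) • p i =
              ((m : Multiset (Fin (d+1))).map p).sum := by
            rw [← count_smul_sum p]
            exact Finset.sum_congr rfl fun i _ => Nat.cast_smul_eq_nsmul ℝ _ _
          have e2 : ∑ i, ((m' : Multiset (Fin (d+1))).count i : ℝ) • p i =
              ((m' : Multiset (Fin (d+1))).map p).sum := by
            rw [← count_smul_sum p]
            exact Finset.sum_congr rfl fun i _ => Nat.cast_smul_eq_nsmul ℝ _ _
          rw [e1, e2]; exact h
      apply Subtype.ext
      ext i
      exact_mod_cast congrFun hc i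
    rw [himg, Finset.card_image_of_injective _ hinj2, Finset.card_univ,
      Sym.card_sym_eq_choose]
    congr 1
    simp only [Fintype.card_fin]
    omega
  have hsingle : ∀ a : Fin d → ℝ, ({a} + kfoldSumset k B).card = (d + k).choose k := by
    intro a
    rw [Finset.singleton_add, Finset.card_vadd_finset, hkBcard]
  have hsplitA : A + kfoldSumset k B
      = ((A ∩ B) + kfoldSumset k B) ∪ ((A \ B) + kfoldSumset k B) := by
    rw [← Finset.union_add]
    congr 1
    rw [Finset.union_comm, Finset.sdiff_union_inter]
  have hbiUnion : (A \ B) + kfoldSumset k B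
      = (A \ B).biUnion (fun a => {a} + kfoldSumset k B) := by
    ext x
    simp only [Finset.mem_add, Finset.mem_biUnion]
    constructor
    · rintro ⟨a, ha, y, hy, rfl⟩
      exact ⟨a, ha, a, Finset.mem_singleton_self a, y, hy, rfl⟩
    · rintro ⟨a, ha, b, hb, y, hy, rfl⟩
      rw [Finset.mem_singleton] at hb
      subst hb
      exact ⟨b, ha, y, hy, rfl⟩
  refine ⟨hdisj1, fun a ha a' ha' hne => hdisj2 a (by exact_mod_cast ha) a'
    (by exact_mod_cast ha') hne, ?_⟩
  rw [hsplitA, Finset.card_union_of_disjoint hdisj1, hbiUnion, Finset.card_biUnion hdisj2]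
  congr 1
  rw [Finset.sum_congr rfl (fun a _ => hsingle a), Finset.sum_const, smul_eq_mul]
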